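/- arXiv:1108.1453 — 2 statements merged into one kernel-verified Lean document; each statement's English description precedes it below -/
import Mathlib

section
/- For any topological spaces A, B, C, there is a continuous map (A ∗ B) × C → (A × C) ∗ (B × C), where ∗ denotes the topological join, which is natural in A, B, and C. -/
/-- The relation generating the topological join `A ∗ B` as a quotient of
`A × B × [0,1]`: `(a, b, 0) ∼ (a, b', 0)` and `(a, b, 1) ∼ (a', b, 1)`. -/
inductive JoinRel (A : Type) (B : Type) :
    A × B × unitInterval → A × B × unitInterval → Prop
  | zero (a : A) (b b' : B) : JoinRel A B (a, b, 0) (a, b', 0)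
  | one (a a' : A) (b : B) : JoinRel A B (a, b, 1) (a', b, 1)

/-- The topological join `A ∗ B`. -/
def Join (A : Type) (B : Type) : Type := Quot (JoinRel A B)

instance (A B : Type) [TopologicalSpace A] [TopologicalSpace B] :
    TopologicalSpace (Join A B) :=
  inferInstanceAs (TopologicalSpace (Quot _))

/-- Functoriality of the join in both variables. -/
def Join.map {A A' B B' : Type} (f : A → A') (g : B → B') :
    Join A B → Join A' B' :=
  Quot.map (fun p => (f p.1, g p.2.1, p.2.2))
    (fun p q h => by cases h <;> constructor)


open Set

noncomputable def sfun : unitInterval → unitInterval :=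
  fun t => Set.projIcc (0:ℝ) 1 zero_le_one (3 * (t : ℝ) - 1)

lemma sfun_continuous : Continuous sfun :=
  continuous_projIcc.comp (by continuity)

lemma sfun_eq_zero {t : unitInterval} (h : (t:ℝ) ≤ 1/3) : sfun t = 0 := by
  have h' : 3 * (t:ℝ) - 1 ≤ 0 := by linarith
  rw [sfun, Set.projIcc_of_le_left _ h']
  rfl

lemma sfun_eq_one {t : unitInterval} (h : (2:ℝ)/3 ≤ t) : sfun t = 1 := by
  have h' : (1:ℝ) ≤ 3 * (t:ℝ) - 1 := by linarith
  rw [sfun, Set.projIcc_of_right_le _ h']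
  rfl

lemma sfun_zero : sfun 0 = 0 := sfun_eq_zero (by norm_num)
lemma sfun_one : sfun 1 = 1 := sfun_eq_one (by norm_num)
noncomputable def dmap (A B C : Type) : Join A B × C → Join (A × C) (B × C) :=
  fun x => Quot.liftOn x.1
    (fun p => Quot.mk (JoinRel (A × C) (B × C)) ((p.1, x.2), (p.2.1, x.2), sfun p.2.2))
    (fun p q h => by
      cases h with
      | zero a b b' =>
          show Quot.mk _ ((a, x.2), (b, x.2), sfun 0) = Quot.mk _ ((a, x.2), (b', x.2), sfun 0)
          rw [sfun_zero]; exact Quot.sound (JoinRel.zero _ _ _)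
      | one a a' b =>
          show Quot.mk _ ((a, x.2), (b, x.2), sfun 1) = Quot.mk _ ((a', x.2), (b, x.2), sfun 1)
          rw [sfun_one]; exact Quot.sound (JoinRel.one _ _ _))

lemma preimage_image_of_sat {A B : Type} {P : Set (A × B × unitInterval)}
    (hP : ∀ x y, JoinRel A B x y → (x ∈ P ↔ y ∈ P)) :
    Quot.mk (JoinRel A B) ⁻¹' (Quot.mk (JoinRel A B) '' P) = P := by
  have key : ∀ x y, Relation.EqvGen (JoinRel A B) x y → (x ∈ P ↔ y ∈ P) := by
    intro x y h
    induction h with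
    | rel _ _ h => exact hP _ _ h
    | refl => exact Iff.rfl
    | symm _ _ _ ih => exact ih.symm
    | trans _ _ _ _ _ ih1 ih2 => exact ih1.trans ih2
  apply Set.Subset.antisymm
  · rintro x ⟨p, hp, hpx⟩
    exact (key p x (Quot.eqvGen_exact hpx)).mp hp
  · intro x hx
    exact ⟨x, hx, rfl⟩

lemma isOpen_join_image {A B : Type} [TopologicalSpace A] [TopologicalSpace B]
    {P : Set (A × B × unitInterval)}
    (hsat : ∀ x y, JoinRel A B x y → (x ∈ P ↔ y ∈ P)) (hopen : IsOpen P) :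
    IsOpen (Quot.mk (JoinRel A B) '' P : Set (Join A B)) := by
  refine ((isQuotientMap_quot_mk (r := JoinRel A B)).isOpen_preimage
    (s := (Quot.mk (JoinRel A B) '' P : Set (Quot (JoinRel A B))))).mp ?_
  rw [preimage_image_of_sat hsat]
  exact hopen

lemma zero_lt_one_I : (0:unitInterval) < 1 := by
  rw [← Subtype.coe_lt_coe]; norm_num

lemma dmap_continuous (A B C : Type) [TopologicalSpace A] [TopologicalSpace B]
    [TopologicalSpace C] : Continuous (dmap A B C) := by
  rw [continuous_def]
  intro U hU
  have hG : IsOpen (Quot.mk (JoinRel (A × C) (B × C)) ⁻¹' U) := hU.preimage continuous_quot_mk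
  rw [isOpen_iff_mem_nhds]
  rintro ⟨j, c⟩ hx
  induction j using Quot.ind with
  | _ p =>
  obtain ⟨a, b, t⟩ := p
  have hval : ((a,c),(b,c), sfun t) ∈ Quot.mk (JoinRel (A × C) (B × C)) ⁻¹' U := hx
  suffices h : ∃ O W, IsOpen O ∧ IsOpen W ∧ Quot.mk (JoinRel A B) (a,b,t) ∈ O ∧ c ∈ W ∧
      O ×ˢ W ⊆ dmap A B C ⁻¹' U by
    obtain ⟨O, W, h1, h2, h3, h4, h5⟩ := h
    exact Filter.mem_of_superset ((h1.prod h2).mem_nhds (Set.mk_mem_prod h3 h4)) h5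
  by_cases hone : sfun t = 1
  · -- HIGH CASE
    rw [hone] at hval
    obtain ⟨u, v, hu, hv, hau, h1v, huv⟩ :=
      isOpen_prod_iff.mp hG (a,c) ((b,c), (1:unitInterval)) hval
    obtain ⟨w, J, hw, hJ, hbw, h1J, hwJ⟩ := isOpen_prod_iff.mp hv (b,c) 1 h1v
    obtain ⟨τ, hτ, hIoc⟩ := exists_Ioc_subset_of_mem_nhds (hJ.mem_nhds h1J) ⟨0, zero_lt_one_I⟩
    obtain ⟨Na, Nc, hNa, hNc, haNa, hcNc, hsubu⟩ := isOpen_prod_iff.mp hu a c hau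
    obtain ⟨Nb, Nc2, hNb, hNc2, hbNb, hcNc2, hsubw⟩ := isOpen_prod_iff.mp hw b c hbw
    set G' : Set (B × C) := (fun y => (((a,c) : A × C), y, (1:unitInterval))) ⁻¹' 
        (Quot.mk (JoinRel (A × C) (B × C)) ⁻¹' U) with hG'def
    have hG'open : IsOpen G' := hG.preimage (by continuity)
    have hbcG' : (b,c) ∈ G' := hval
    obtain ⟨Nb2, W2, hNb2, hW2, hbNb2, hcW2, hsubG⟩ := isOpen_prod_iff.mp hG'open b c hbcG'
    set NB := Nb ∩ Nb2 with hNBdef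
    set W := Nc ∩ Nc2 ∩ W2 with hWdef
    set P : Set (A × B × unitInterval) :=
      (Na ×ˢ NB ×ˢ {t' | τ < sfun t'}) ∪
      ((Set.univ : Set A) ×ˢ NB ×ˢ {t' : unitInterval | (2:ℝ)/3 < t'}) with hPdef
    have hsat : ∀ x y, JoinRel A B x y → (x ∈ P ↔ y ∈ P) := by
      intro x y h
      cases h with
      | zero a' b1 b2 =>
        have h0 : ∀ b'' : B, (a', b'', (0:unitInterval)) ∉ P := by
          rintro b'' (⟨_, _, ht⟩ | ⟨_, _, ht⟩)
          · rw [Set.mem_setOf_eq, sfun_zero] at ht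
            exact absurd ht (not_lt.mpr τ.2.1)
          · rw [Set.mem_setOf_eq] at ht
            norm_num at ht
        exact ⟨fun h => absurd h (h0 _), fun h => absurd h (h0 _)⟩
      | one a1 a2 b' =>
        have h1 : ∀ a'' : A, ((a'', b', (1:unitInterval)) ∈ P ↔ b' ∈ NB) := by
          intro a''
          constructor
          · rintro (⟨_, hb, _⟩ | ⟨_, hb, _⟩) <;> exact hb
          · intro hb
            exact Or.inr ⟨trivial, hb, by rw [Set.mem_setOf_eq]; norm_num⟩
        rw [h1, h1]
    have hPopen : IsOpen P := by
      apply IsOpen.union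
      · exact hNa.prod ((hNb.inter hNb2).prod
          ((isOpen_Ioi).preimage sfun_continuous))
      · exact isOpen_univ.prod ((hNb.inter hNb2).prod
          ((isOpen_Ioi).preimage continuous_subtype_val))
    refine ⟨Quot.mk _ '' P, W, isOpen_join_image hsat hPopen,
      (hNc.inter hNc2).inter hW2,
      ⟨(a,b,t), Or.inl ⟨haNa, ⟨hbNb, hbNb2⟩, by rw [Set.mem_setOf_eq, hone]; exact hτ⟩, rfl⟩,
      ⟨⟨hcNc, hcNc2⟩, hcW2⟩, ?_⟩
    rintro ⟨j', c'⟩ ⟨hj', hc'⟩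
    obtain ⟨⟨a', b', t'⟩, hp, rfl⟩ := hj'
    show Quot.mk _ ((a',c'),(b',c'), sfun t') ∈ U
    rcases hp with ⟨ha', hb', ht'⟩ | ⟨_, hb', ht'⟩
    · exact huv ⟨hsubu ⟨ha', hc'.1.1⟩, hwJ ⟨hsubw ⟨hb'.1, hc'.1.2⟩, hIoc ⟨ht', (sfun t').2.2⟩⟩⟩
    · rw [sfun_eq_one (le_of_lt ht'),
        Quot.sound (JoinRel.one ((a',c') : A × C) ((a,c) : A × C) ((b',c') : B × C))]
      exact hsubG ⟨hb'.2, hc'.2⟩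
  · by_cases hzero : sfun t = 0
    · -- LOW CASE
      rw [hzero] at hval
      obtain ⟨u, v, hu, hv, hau, h0v, huv⟩ :=
        isOpen_prod_iff.mp hG (a,c) ((b,c), (0:unitInterval)) hval
      obtain ⟨w, J, hw, hJ, hbw, h0J, hwJ⟩ := isOpen_prod_iff.mp hv (b,c) 0 h0v
      obtain ⟨τ, hτ, hIco⟩ := exists_Ico_subset_of_mem_nhds (hJ.mem_nhds h0J) ⟨1, zero_lt_one_I⟩
      obtain ⟨Na, Nc, hNa, hNc, haNa, hcNc, hsubu⟩ := isOpen_prod_iff.mp hu a c hau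
      obtain ⟨Nb, Nc2, hNb, hNc2, hbNb, hcNc2, hsubw⟩ := isOpen_prod_iff.mp hw b c hbw
      set G0 : Set (A × C) := (fun z => (z, ((b,c) : B × C), (0:unitInterval))) ⁻¹' 
          (Quot.mk (JoinRel (A × C) (B × C)) ⁻¹' U) with hG0def
      have hG0open : IsOpen G0 := hG.preimage (by continuity)
      have hacG0 : (a,c) ∈ G0 := hval
      obtain ⟨Na0, W0, hNa0, hW0, haNa0, hcW0, hsubG⟩ := isOpen_prod_iff.mp hG0open a c hacG0
      set NA := Na ∩ Na0 with hNAdef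
      set P : Set (A × B × unitInterval) :=
        (NA ×ˢ Nb ×ˢ {t' | sfun t' < τ}) ∪
        (NA ×ˢ (Set.univ : Set B) ×ˢ {t' : unitInterval | (t' : ℝ) < 1/3}) with hPdef
      have hsat : ∀ x y, JoinRel A B x y → (x ∈ P ↔ y ∈ P) := by
        intro x y h
        cases h with
        | zero a' b1 b2 =>
          have h0 : ∀ b'' : B, ((a', b'', (0:unitInterval)) ∈ P ↔ a' ∈ NA) := by
            intro b''
            constructor
            · rintro (⟨ha, _, _⟩ | ⟨ha, _, _⟩) <;> exact ha
            · intro ha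
              exact Or.inr ⟨ha, trivial, by rw [Set.mem_setOf_eq]; norm_num⟩
          rw [h0, h0]
        | one a1 a2 b' =>
          have h1 : ∀ a'' : A, (a'', b', (1:unitInterval)) ∉ P := by
            rintro a'' (⟨_, _, ht⟩ | ⟨_, _, ht⟩)
            · rw [Set.mem_setOf_eq, sfun_one] at ht
              exact absurd ht (not_lt.mpr τ.2.2)
            · rw [Set.mem_setOf_eq] at ht
              norm_num at ht
          exact ⟨fun h => absurd h (h1 _), fun h => absurd h (h1 _)⟩
      have hPopen : IsOpen P := by
        apply IsOpen.union
        · exact (hNa.inter hNa0).prod (hNb.prod ((isOpen_Iio).preimage sfun_continuous))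
        · exact (hNa.inter hNa0).prod (isOpen_univ.prod
            ((isOpen_Iio).preimage continuous_subtype_val))
      refine ⟨Quot.mk _ '' P, Nc ∩ Nc2 ∩ W0, isOpen_join_image hsat hPopen,
        (hNc.inter hNc2).inter hW0,
        ⟨(a,b,t), Or.inl ⟨⟨haNa, haNa0⟩, hbNb, by rw [Set.mem_setOf_eq, hzero]; exact hτ⟩, rfl⟩,
        ⟨⟨hcNc, hcNc2⟩, hcW0⟩, ?_⟩
      rintro ⟨j', c'⟩ ⟨hj', hc'⟩
      obtain ⟨⟨a', b', t'⟩, hp, rfl⟩ := hj'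
      show Quot.mk _ ((a',c'),(b',c'), sfun t') ∈ U
      rcases hp with ⟨ha', hb', ht'⟩ | ⟨ha', _, ht'⟩
      · exact huv ⟨hsubu ⟨ha'.1, hc'.1.1⟩, hwJ ⟨hsubw ⟨hb', hc'.1.2⟩, hIco ⟨(sfun t').2.1, ht'⟩⟩⟩
      · rw [sfun_eq_zero (le_of_lt ht'),
          Quot.sound (JoinRel.zero ((a',c') : A × C) ((b',c') : B × C) ((b,c) : B × C))]
        exact hsubG ⟨ha'.2, hc'.2⟩
    · -- MID CASE
      obtain ⟨u, v, hu, hv, hau, hsv, huv⟩ :=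
        isOpen_prod_iff.mp hG (a,c) ((b,c), sfun t) hval
      obtain ⟨w, J, hw, hJ, hbw, hsJ, hwJ⟩ := isOpen_prod_iff.mp hv (b,c) (sfun t) hsv
      obtain ⟨Na, Nc, hNa, hNc, haNa, hcNc, hsubu⟩ := isOpen_prod_iff.mp hu a c hau
      obtain ⟨Nb, Nc2, hNb, hNc2, hbNb, hcNc2, hsubw⟩ := isOpen_prod_iff.mp hw b c hbw
      set T : Set unitInterval := sfun ⁻¹' (J \ {0, 1}) with hTdef
      set P : Set (A × B × unitInterval) := Na ×ˢ Nb ×ˢ T with hPdef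
      have hsat : ∀ x y, JoinRel A B x y → (x ∈ P ↔ y ∈ P) := by
        intro x y h
        cases h with
        | zero a' b1 b2 =>
          have h0 : ∀ b'' : B, (a', b'', (0:unitInterval)) ∉ P := by
            rintro b'' ⟨_, _, ht⟩
            rw [Set.mem_preimage, sfun_zero] at ht
            exact ht.2 (Or.inl rfl)
          exact ⟨fun h => absurd h (h0 _), fun h => absurd h (h0 _)⟩
        | one a1 a2 b' =>
          have h1 : ∀ a'' : A, (a'', b', (1:unitInterval)) ∉ P := by
            rintro a'' ⟨_, _, ht⟩
            rw [Set.mem_preimage, sfun_one] at ht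
            exact ht.2 (Or.inr rfl)
          exact ⟨fun h => absurd h (h1 _), fun h => absurd h (h1 _)⟩
      have hPopen : IsOpen P :=
        hNa.prod (hNb.prod ((hJ.sdiff (Set.Finite.isClosed (by
          exact (Set.finite_singleton _).insert _))).preimage sfun_continuous))
      refine ⟨Quot.mk _ '' P, Nc ∩ Nc2, isOpen_join_image hsat hPopen, hNc.inter hNc2,
        ⟨(a,b,t), ⟨haNa, hbNb, ⟨hsJ, ?_⟩⟩, rfl⟩, ⟨hcNc, hcNc2⟩, ?_⟩
      · rintro (h | h) <;> [exact hzero h; exact hone h]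
      · rintro ⟨j', c'⟩ ⟨hj', hc'⟩
        obtain ⟨⟨a', b', t'⟩, hp, rfl⟩ := hj'
        obtain ⟨ha', hb', ht'⟩ := hp
        show Quot.mk _ ((a',c'),(b',c'), sfun t') ∈ U
        exact huv ⟨hsubu ⟨ha', hc'.1⟩, hwJ ⟨hsubw ⟨hb', hc'.2⟩, ht'.1⟩⟩

/-- There is a continuous map `(A ∗ B) × C → (A × C) ∗ (B × C)`, natural in
`A`, `B`, and `C`. -/
theorem join_prod_distributor :
    ∃ d : ∀ (A B C : Type) [TopologicalSpace A] [TopologicalSpace B]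
        [TopologicalSpace C], Join A B × C → Join (A × C) (B × C),
      (∀ (A B C : Type) [TopologicalSpace A] [TopologicalSpace B]
          [TopologicalSpace C], Continuous (d A B C)) ∧
      (∀ (A A' B B' C C' : Type) [TopologicalSpace A] [TopologicalSpace A']
          [TopologicalSpace B] [TopologicalSpace B'] [TopologicalSpace C]
          [TopologicalSpace C']
          (f : A → A') (g : B → B') (h : C → C'),
          Continuous f → Continuous g → Continuous h →
          Join.map (Prod.map f h) (Prod.map g h) ∘ d A B C =
            d A' B' C' ∘ Prod.map (Join.map f g) h) := by
  refine ⟨fun A B C _ _ _ => dmap A B C, fun A B C _ _ _ => dmap_continuous A B C, ?_⟩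
  intro A A' B B' C C' _ _ _ _ _ _ f g h _ _ _
  funext x
  obtain ⟨j, c⟩ := x
  induction j using Quot.ind with
  | _ p =>
  obtain ⟨a, b, t⟩ := p
  rfl
end

section
/- If A is path-connected and B is nonempty, then the join A ∗ B is simply connected. -/
set_option linter.unusedSectionVars false
set_option linter.unusedVariables false
set_option maxHeartbeats 1000000
namespace JoinSC

open CategoryTheory unitInterval



/-- convex combination in the unit interval -/
def comb (s c d : I) : I :=
  ⟨(1 - s.1) * c.1 + s.1 * d.1, by
    constructor
    · have := s.2.1; have := s.2.2; have := c.2.1; have := d.2.1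
      nlinarith
    · have := s.2.1; have := s.2.2; have := c.2.1; have := c.2.2
      have := d.2.1; have := d.2.2
      nlinarith⟩

@[simp] lemma comb_zero (c d : I) : comb 0 c d = c := by
  simp [comb]

@[simp] lemma comb_one (c d : I) : comb 1 c d = d := by
  simp [comb]

@[simp] lemma comb_self (s c : I) : comb s c c = c := by
  simp [comb]; ring_nf

lemma continuous_comb : Continuous fun p : (I × I) × I => comb p.1.1 p.1.2 p.2 := by
  apply Continuous.subtype_mk
  fun_prop

/-- Any two paths with the same endpoints in `I` are homotopic. -/
lemma homotopic_I {x y : I} (p p' : Path x y) : p.Homotopic p' := by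
  refine ⟨⟨⟨⟨fun su => comb su.1 (p su.2) (p' su.2), ?_⟩, ?_, ?_⟩, ?_⟩⟩
  · exact continuous_comb.comp ((continuous_fst.prodMk
      (p.continuous.comp continuous_snd)).prodMk (p'.continuous.comp continuous_snd))
  · intro u; simp
  · intro u; simp
  · rintro s u (h | h)
    · subst h; simp
    · simp only [Set.mem_singleton_iff] at h; subst h; simp

instance subsingleton_I (x y : I) : Subsingleton (Path.Homotopic.Quotient x y) :=
  ⟨fun a b => Quotient.inductionOn₂ a b fun p p' => Quotient.sound (homotopic_I p p')⟩

/-- Any two paths with the same endpoints in `I × I` are homotopic. -/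
lemma homotopic_I2 {x y : I × I} (p p' : Path x y) : p.Homotopic p' := by
  refine ⟨⟨⟨⟨fun su => (comb su.1 (p su.2).1 (p' su.2).1, comb su.1 (p su.2).2 (p' su.2).2), ?_⟩,
      ?_, ?_⟩, ?_⟩⟩
  · have h1 : Continuous (fun su : unitInterval × unitInterval =>
        ((su.1, (p su.2).1), (p' su.2).1)) := by fun_prop
    have h2 : Continuous (fun su : unitInterval × unitInterval =>
        ((su.1, (p su.2).2), (p' su.2).2)) := by fun_prop
    exact (continuous_comb.comp h1).prodMk (continuous_comb.comp h2)
  · intro u; simp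
  · intro u; simp
  · rintro s u (h | h)
    · subst h; simp
    · simp only [Set.mem_singleton_iff] at h; subst h; simp

instance subsingleton_I2 (x y : I × I) : Subsingleton (Path.Homotopic.Quotient x y) :=
  ⟨fun a b => Quotient.inductionOn₂ a b fun p p' => Quotient.sound (homotopic_I2 p p')⟩


section Squares

open CategoryTheory

variable {X : Type} [TopologicalSpace X]

/-- The homotopy class of a path, as a morphism of the fundamental groupoid. -/
def hcl {x y : X} (p : Path x y) :
    FundamentalGroupoid.mk x ⟶ FundamentalGroupoid.mk y := ⟦p⟧

/-- `eqToHom` for points. -/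
noncomputable def eh {x y : X} (h : x = y) :
    FundamentalGroupoid.mk x ⟶ FundamentalGroupoid.mk y := eqToHom (congrArg _ h)

@[simp] lemma eh_rfl {x : X} : eh (rfl : x = x) = 𝟙 _ := rfl

@[simp] lemma eh_trans {x y z : X} (h : x = y) (h' : y = z) : eh h ≫ eh h' = eh (h.trans h') := by
  subst h; subst h'; simp [eh]

@[simp] lemma eh_trans_assoc {x y z : X} (h : x = y) (h' : y = z) {c} (f : FundamentalGroupoid.mk z ⟶ c) :
    eh h ≫ eh h' ≫ f = eh (h.trans h') ≫ f := by
  subst h; subst h'; simp [eh]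

lemma hcl_trans {x y z : X} (p : Path x y) (q : Path y z) :
    hcl (p.trans q) = hcl p ≫ hcl q := by
  rw [show hcl p ≫ hcl q = Path.Homotopic.Quotient.trans ⟦p⟧ ⟦q⟧ from
    FundamentalGroupoid.comp_eq _ _ _ _ _]
  exact Path.Homotopic.Quotient.mk_trans p q

lemma hcl_eq {x y x' y' : X} (p : Path x y) (p' : Path x' y') (hx : x = x') (hy : y' = y)
    (h : ∀ u, p u = p' u) : hcl p = eh hx ≫ hcl p' ≫ eh hy := by
  subst hx; subst hy
  simp only [eh_rfl, CategoryTheory.Category.comp_id, CategoryTheory.Category.id_comp]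
  exact congrArg Quotient.mk'' (Path.ext (funext h))

lemma hcl_const {x y : X} (p : Path x y) (h : ∀ u, p u = x) :
    hcl p = eh ((h 1).symm.trans p.target) := by
  obtain rfl : x = y := (h 1).symm.trans p.target
  have hp : p = Path.refl x := Path.ext (funext h)
  rw [hp]
  exact ((FundamentalGroupoid.id_eq_path_refl (FundamentalGroupoid.mk x)).symm : _)

lemma hcl_symm_comp {x y : X} (p : Path x y) : hcl p ≫ hcl p.symm = 𝟙 _ := by
  rw [← hcl_trans, show (𝟙 (FundamentalGroupoid.mk x) : _) = ⟦Path.refl x⟧ from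
    FundamentalGroupoid.id_eq_path_refl _]
  exact (Quotient.sound (⟨Path.Homotopy.reflTransSymm p⟩ : (Path.refl x).Homotopic (p.trans p.symm))).symm

lemma hcl_symm {x y : X} (p : Path x y) : hcl p.symm = CategoryTheory.inv (hcl p) :=
  CategoryTheory.IsIso.eq_inv_of_hom_inv_id (hcl_symm_comp p)

def sqPathB : Path ((0,0) : unitInterval × unitInterval) (1,0) :=
  ⟨⟨fun u => (u,0), by fun_prop⟩, rfl, rfl⟩
def sqPathT : Path ((0,1) : unitInterval × unitInterval) (1,1) :=
  ⟨⟨fun u => (u,1), by fun_prop⟩, rfl, rfl⟩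
def sqPathL : Path ((0,0) : unitInterval × unitInterval) (0,1) :=
  ⟨⟨fun s => (0,s), by fun_prop⟩, rfl, rfl⟩
def sqPathR : Path ((1,0) : unitInterval × unitInterval) (1,1) :=
  ⟨⟨fun s => (1,s), by fun_prop⟩, rfl, rfl⟩

lemma square (G : C(unitInterval × unitInterval, X)) :
    hcl (sqPathB.map G.continuous) ≫ hcl (sqPathR.map G.continuous)
      = hcl (sqPathL.map G.continuous) ≫ hcl (sqPathT.map G.continuous) := by
  rw [← hcl_trans, ← hcl_trans, ← Path.map_trans, ← Path.map_trans]
  exact Quotient.sound (Path.Homotopic.map (homotopic_I2 _ _) G)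

end Squares

section JoinBasics

open CategoryTheory

variable {A B : Type} [TopologicalSpace A] [TopologicalSpace B]

/-- The quotient map defining the join. -/
abbrev jq (p : A × B × unitInterval) : Join A B := Quot.mk _ p

lemma jq_cont : Continuous (jq : A × B × unitInterval → Join A B) := continuous_quot_mk

lemma jq_quot : Topology.IsQuotientMap (jq : A × B × unitInterval → Join A B) :=
  isQuotientMap_quot_mk

lemma jq_zero (a : A) (b b' : B) : (jq (a,b,0) : Join A B) = jq (a,b',0) :=
  Quot.sound (JoinRel.zero a b b')

lemma jq_one (a a' : A) (b : B) : (jq (a,b,1) : Join A B) = jq (a',b,1) :=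
  Quot.sound (JoinRel.one a a' b)

/-- The join coordinate. -/
def tau : Join A B → unitInterval :=
  Quot.lift (fun p => p.2.2) (by rintro _ _ (⟨a,b,b'⟩|⟨a,a',b⟩) <;> rfl)

@[simp] lemma tau_jq (p : A × B × unitInterval) : tau (jq p : Join A B) = p.2.2 := rfl

lemma tau_cont : Continuous (tau : Join A B → unitInterval) :=
  continuous_quot_lift _ (by fun_prop)

/-- straight path in `I` from `t` down to `0`, via `min`. -/
def iDown (t : unitInterval) : Path t 0 :=
  ⟨⟨fun s => ⟨min t.1 (1 - s.1), le_min t.2.1 (by linarith [s.2.2]),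
      (min_le_left _ _).trans t.2.2⟩, by
    apply Continuous.subtype_mk; fun_prop⟩,
    Subtype.ext (by simp [t.2.2]), Subtype.ext (by simp [t.2.1])⟩

/-- straight path in `I` from `t` up to `1`, via `max`. -/
def iUp (t : unitInterval) : Path t 1 :=
  ⟨⟨fun s => ⟨max t.1 s.1, le_max_of_le_left t.2.1,
      max_le t.2.2 s.2.2⟩, by
    apply Continuous.subtype_mk; fun_prop⟩,
    Subtype.ext (by simp [t.2.1]), Subtype.ext (by simp [t.2.2])⟩

/-- the identity path in `I`. -/
def iId : Path (0 : unitInterval) 1 := ⟨⟨fun s => s, continuous_id⟩, rfl, rfl⟩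

/-- The vertical map `s ↦ jq (a, b, s)`. -/
def qab (a : A) (b : B) : C(unitInterval, Join A B) := ⟨fun s => jq (a,b,s), by fun_prop⟩

/-- vertical path from level `0` to level `1`. -/
def piPath (a : A) (b : B) : Path (jq (a,b,0) : Join A B) (jq (a,b,1)) :=
  iId.map (qab a b).continuous

/-- vertical path from level `t` down to level `0`. -/
def downPath (a : A) (b : B) (t : unitInterval) :
    Path (jq (a,b,t) : Join A B) (jq (a,b,0)) :=
  (iDown t).map (qab a b).continuous

/-- vertical path from level `t` up to level `1`. -/
def upPath (a : A) (b : B) (t : unitInterval) :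
    Path (jq (a,b,t) : Join A B) (jq (a,b,1)) :=
  (iUp t).map (qab a b).continuous

lemma down_trans_pi (a : A) (b : B) (t : unitInterval) :
    hcl ((downPath a b t).trans (piPath a b)) = hcl (upPath a b t) := by
  unfold downPath piPath upPath
  refine (congrArg hcl (Path.map_trans (iDown t) iId (qab a b).continuous)).symm.trans ?_
  exact Quotient.sound (Path.Homotopic.map (homotopic_I _ _) (qab a b))

/-- horizontal path at the bottom along a path in `A`. -/
def botPath (b : B) {a a' : A} (α : Path a a') :
    Path (jq (a,b,0) : Join A B) (jq (a',b,0)) :=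
  α.map (show Continuous fun x : A => (jq (x,b,0) : Join A B) by fun_prop)

lemma joined_base [PathConnectedSpace A] (a₀ : A) (b₀ : B) (x : Join A B) :
    Joined x (jq (a₀, b₀, 0) : Join A B) := by
  obtain ⟨⟨a,b,t⟩, rfl⟩ := Quot.exists_rep x
  refine Joined.trans ⟨downPath a b t⟩ ?_
  rw [jq_zero a b b₀]
  exact ⟨(botPath b₀ (PathConnectedSpace.somePath a₀ a)).symm⟩

end JoinBasics

section Descent

variable {A B : Type} [TopologicalSpace A] [TopologicalSpace B]
variable (P : unitInterval → Prop)

/-- restriction of `jq` to a `t`-slice. -/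
def qS : {p : A × B × unitInterval // P p.2.2} → {x : Join A B // P (tau x)} :=
  fun p => ⟨jq p.1, p.2⟩

lemma qS_cont : Continuous (qS (A := A) (B := B) P) :=
  (jq_cont.comp continuous_subtype_val).subtype_mk _

lemma qS_surj : Function.Surjective (qS (A := A) (B := B) P) := by
  rintro ⟨x, hx⟩
  obtain ⟨p, rfl⟩ := Quot.exists_rep x
  exact ⟨⟨p, hx⟩, rfl⟩

lemma qS_quotientMap (hP : IsOpen {t | P t}) :
    Topology.IsQuotientMap (qS (A := A) (B := B) P) := by
  simp_rw [Topology.isQuotientMap_iff, Topology.isCoinducing_iff, and_comm, iff_comm]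
  refine ⟨qS_surj P, fun W => ⟨fun h => h.preimage (qS_cont P), fun h => ?_⟩⟩
  have hopen : IsOpen {p : A × B × unitInterval | P p.2.2} :=
    hP.preimage (by fun_prop : Continuous fun p : A × B × unitInterval => p.2.2)
  have hsat : jq ⁻¹' (Subtype.val '' W) = Subtype.val '' (qS (A := A) (B := B) P ⁻¹' W) := by
    ext p
    constructor
    · rintro ⟨x, hxW, hx⟩
      have hp : P p.2.2 := by
        have := x.2
        rw [hx] at this
        exact this
      refine ⟨⟨p, hp⟩, ?_, rfl⟩
      have : qS (A := A) (B := B) P ⟨p, hp⟩ = x := Subtype.ext hx.symm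
      rw [Set.mem_preimage, this]
      exact hxW
    · rintro ⟨u, huW, rfl⟩
      exact ⟨qS (A := A) (B := B) P u, huW, rfl⟩
  have h1 : IsOpen (jq ⁻¹' (Subtype.val '' W)) := by
    rw [hsat]
    exact hopen.isOpenMap_subtype_val _ h
  have h2 : IsOpen (Subtype.val '' W) := jq_quot.isOpen_preimage.mp h1
  have h3 : W = Subtype.val ⁻¹' (Subtype.val '' W) :=
    (Subtype.val_injective.preimage_image W).symm
  rw [h3]
  exact h2.preimage continuous_subtype_val

lemma tau_eqvGen {p p' : A × B × unitInterval} (h : Relation.EqvGen (JoinRel A B) p p') :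
    p.2.2 = p'.2.2 := by
  induction h with
  | rel u v huv => cases huv <;> rfl
  | refl u => rfl
  | symm u v _ ih => exact ih.symm
  | trans u v w _ _ ih1 ih2 => exact ih1.trans ih2

/-- the relation on the slice. -/
def JR : {p : A × B × unitInterval // P p.2.2} → {p : A × B × unitInterval // P p.2.2} → Prop :=
  fun u v => JoinRel A B u.1 v.1

lemma liftEqvGen {p p' : A × B × unitInterval} (h : Relation.EqvGen (JoinRel A B) p p') :
    ∀ (hp : P p.2.2) (hp' : P p'.2.2),
      Quot.mk (JR P) ⟨p, hp⟩ = Quot.mk (JR P) ⟨p', hp'⟩ := by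
  induction h with
  | rel u v huv => exact fun hp hp' => Quot.sound huv
  | refl u => exact fun hp hp' => rfl
  | symm u v h ih => exact fun hp hp' => (ih hp' hp).symm
  | trans u v w h1 h2 ih1 ih2 =>
      intro hp hp'
      have hv : P v.2.2 := by rw [← tau_eqvGen h1]; exact hp
      exact (ih1 hp hv).trans (ih2 hv hp')

/-- comparison map from the slice quotient to the slice of the quotient. -/
def theta : Quot (JR (A := A) (B := B) P) → {x : Join A B // P (tau x)} :=
  Quot.lift (qS P) (fun u v h => Subtype.ext (Quot.sound h))

lemma theta_bijective : Function.Bijective (theta (A := A) (B := B) P) := by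
  constructor
  · intro u v
    induction u using Quot.ind with | _ u =>
    induction v using Quot.ind with | _ v =>
    intro h
    have : jq u.1 = jq v.1 := congrArg Subtype.val h
    exact liftEqvGen P (Quot.eq.mp this) u.2 v.2
  · intro x
    obtain ⟨u, hu⟩ := qS_surj P x
    exact ⟨Quot.mk _ u, hu⟩

/-- the slice equivalence. -/
noncomputable def thetaEquiv : Quot (JR (A := A) (B := B) P) ≃ {x : Join A B // P (tau x)} :=
  Equiv.ofBijective _ (theta_bijective P)

lemma thetaEquiv_symm_qS (u : {p : A × B × unitInterval // P p.2.2}) :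
    (thetaEquiv (A := A) (B := B) P).symm (qS P u) = Quot.mk _ u := by
  have : qS (A := A) (B := B) P u = thetaEquiv P (Quot.mk _ u) := rfl
  rw [this, Equiv.symm_apply_apply]

/-- Descend a fiberwise-constant continuous family of paths from the slice to the join. -/
noncomputable def descend (Φ : {p : A × B × unitInterval // P p.2.2} → C(unitInterval, Join A B))
    (hΦ : ∀ u v, JR P u v → Φ u = Φ v) :
    {x : Join A B // P (tau x)} → C(unitInterval, Join A B) :=
  (Quot.lift Φ hΦ) ∘ (thetaEquiv P).symm

lemma descend_mk (Φ) (hΦ) (u : {p : A × B × unitInterval // P p.2.2}) :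
    descend P Φ hΦ (qS P u) = Φ u := by
  unfold descend
  simp [Function.comp, thetaEquiv_symm_qS]

lemma descend_cont (hP : IsOpen {t | P t}) (Φ) (hΦ) (hc : Continuous Φ) :
    Continuous (descend (A := A) (B := B) P Φ hΦ) := by
  unfold descend
  have h1 : Continuous ((Quot.lift Φ hΦ)) := continuous_quot_lift _ hc
  refine h1.comp ?_
  rw [(qS_quotientMap P hP).continuous_iff]
  have : (thetaEquiv (A := A) (B := B) P).symm ∘ qS P = Quot.mk _ :=
    funext fun u => thetaEquiv_symm_qS P u
  rw [this]
  exact continuous_quot_mk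

end Descent

section Families

variable {A B : Type} [TopologicalSpace A] [TopologicalSpace B]
variable (a₀ : A) (b₀ : B)

/-- Explicit contraction path on `{τ ≠ 1}`: down to the bottom, switch `b` to `b₀`,
up to the top, switch `a` to `a₀`, down to the base point. -/
noncomputable def cExp (a : A) (b : B) (t : unitInterval) :
    Path (jq (a,b,t) : Join A B) (jq (a₀,b₀,0)) :=
  ((downPath a b t).trans ((piPath a b₀).cast (jq_zero a b b₀) rfl)).trans
    (((piPath a₀ b₀).symm).cast (jq_one a a₀ b₀) rfl)

/-- Explicit contraction path on `{τ ≠ 0}`: up to the top, switch `a` to `a₀`,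
down to the base point. -/
noncomputable def dExp (a : A) (b : B) (t : unitInterval) :
    Path (jq (a,b,t) : Join A B) (jq (a₀,b₀,0)) :=
  (upPath a b t).trans (((piPath a₀ b).symm).cast (jq_one a a₀ b) (jq_zero a₀ b₀ b))

lemma iDown_zero_eq (u : unitInterval) : iDown (0 : unitInterval) u = 0 := by
  apply Subtype.ext
  show min ((0:unitInterval):ℝ) (1 - (u:ℝ)) = ((0:unitInterval):ℝ)
  rw [show ((0:unitInterval):ℝ) = 0 from rfl]
  exact min_eq_left (by linarith [u.2.2])

lemma iUp_one_eq (u : unitInterval) : iUp (1 : unitInterval) u = 1 := by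
  apply Subtype.ext
  show max ((1:unitInterval):ℝ) (u:ℝ) = ((1:unitInterval):ℝ)
  rw [show ((1:unitInterval):ℝ) = 1 from rfl]
  exact max_eq_left u.2.2

lemma cExp_invariant (u v : {p : A × B × unitInterval // p.2.2 ≠ 1})
    (h : JR (fun t => t ≠ 1) u v) :
    (cExp a₀ b₀ u.1.1 u.1.2.1 u.1.2.2).toContinuousMap
      = (cExp a₀ b₀ v.1.1 v.1.2.1 v.1.2.2).toContinuousMap := by
  obtain ⟨⟨a1,b1,t1⟩, hu⟩ := u
  obtain ⟨⟨a2,b2,t2⟩, hv⟩ := v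
  cases h with
  | zero a b b' =>
      ext s
      show cExp a₀ b₀ a1 b1 0 s = cExp a₀ b₀ a1 b2 0 s
      unfold cExp
      rw [Path.trans_apply, Path.trans_apply]
      split_ifs with h1
      · rw [Path.trans_apply, Path.trans_apply]
        split_ifs with h2
        · show jq (a1, b1, iDown (0:unitInterval) _) = jq (a1, b2, iDown (0:unitInterval) _)
          rw [iDown_zero_eq]
          exact jq_zero a1 b1 b2

        · rfl
      · rfl
  | one a a' b => exact absurd rfl hu

lemma dExp_invariant (u v : {p : A × B × unitInterval // p.2.2 ≠ 0})
    (h : JR (fun t => t ≠ 0) u v) :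
    (dExp a₀ b₀ u.1.1 u.1.2.1 u.1.2.2).toContinuousMap
      = (dExp a₀ b₀ v.1.1 v.1.2.1 v.1.2.2).toContinuousMap := by
  obtain ⟨⟨a1,b1,t1⟩, hu⟩ := u
  obtain ⟨⟨a2,b2,t2⟩, hv⟩ := v
  cases h with
  | zero a b b' => exact absurd rfl hu
  | one a a' b =>
      ext s
      show dExp a₀ b₀ a1 b1 1 s = dExp a₀ b₀ a2 b1 1 s
      unfold dExp
      rw [Path.trans_apply, Path.trans_apply]
      split_ifs with h1
      · show jq (a1, b1, iUp (1:unitInterval) _) = jq (a2, b1, iUp (1:unitInterval) _)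
        rw [iUp_one_eq]
        exact jq_one a1 a2 b1
      · rfl

lemma cExp_uncurry_cont :
    Continuous ↿(fun u : {p : A × B × unitInterval // p.2.2 ≠ 1} =>
      cExp a₀ b₀ u.1.1 u.1.2.1 u.1.2.2) := by
  apply Path.trans_continuous_family
  · apply Path.trans_continuous_family
    · show Continuous fun us : {p : A × B × unitInterval // p.2.2 ≠ 1} × unitInterval =>
        jq (us.1.1.1, us.1.1.2.1, iDown us.1.1.2.2 us.2)
      refine jq_cont.comp ?_
      refine Continuous.prodMk (by fun_prop) (Continuous.prodMk (by fun_prop) ?_)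
      apply Continuous.subtype_mk
      fun_prop
    · show Continuous fun us : {p : A × B × unitInterval // p.2.2 ≠ 1} × unitInterval =>
        jq (us.1.1.1, b₀, us.2)
      refine jq_cont.comp ?_
      fun_prop
  · show Continuous fun us : {p : A × B × unitInterval // p.2.2 ≠ 1} × unitInterval =>
      jq (a₀, b₀, unitInterval.symm us.2)
    refine jq_cont.comp ?_
    fun_prop

lemma dExp_uncurry_cont :
    Continuous ↿(fun u : {p : A × B × unitInterval // p.2.2 ≠ 0} =>
      dExp a₀ b₀ u.1.1 u.1.2.1 u.1.2.2) := by
  apply Path.trans_continuous_family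
  · show Continuous fun us : {p : A × B × unitInterval // p.2.2 ≠ 0} × unitInterval =>
      jq (us.1.1.1, us.1.1.2.1, iUp us.1.1.2.2 us.2)
    refine jq_cont.comp ?_
    refine Continuous.prodMk (by fun_prop) (Continuous.prodMk (by fun_prop) ?_)
    apply Continuous.subtype_mk
    fun_prop
  · show Continuous fun us : {p : A × B × unitInterval // p.2.2 ≠ 0} × unitInterval =>
      jq (a₀, us.1.1.2.1, unitInterval.symm us.2)
    refine jq_cont.comp ?_
    fun_prop

/-- The continuous contraction family on `{τ ≠ 1}`. -/
noncomputable def famC : {x : Join A B // tau x ≠ 1} → C(unitInterval, Join A B) :=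
  descend (fun t => t ≠ 1)
    (fun u => (cExp a₀ b₀ u.1.1 u.1.2.1 u.1.2.2).toContinuousMap)
    (cExp_invariant a₀ b₀)

lemma famC_cont : Continuous (famC (A := A) (B := B) a₀ b₀) := by
  apply descend_cont _ (isOpen_ne) _ _
  apply ContinuousMap.continuous_of_continuous_uncurry
  exact cExp_uncurry_cont a₀ b₀

lemma famC_mk (a : A) (b : B) (t : unitInterval) (h : tau (jq (a,b,t) : Join A B) ≠ 1) :
    famC a₀ b₀ ⟨jq (a,b,t), h⟩ = (cExp a₀ b₀ a b t).toContinuousMap :=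
  descend_mk _ _ _ ⟨(a,b,t), h⟩

/-- The continuous contraction family on `{τ ≠ 0}`. -/
noncomputable def famD : {x : Join A B // tau x ≠ 0} → C(unitInterval, Join A B) :=
  descend (fun t => t ≠ 0)
    (fun u => (dExp a₀ b₀ u.1.1 u.1.2.1 u.1.2.2).toContinuousMap)
    (dExp_invariant a₀ b₀)

lemma famD_cont : Continuous (famD (A := A) (B := B) a₀ b₀) := by
  apply descend_cont _ (isOpen_ne) _ _
  apply ContinuousMap.continuous_of_continuous_uncurry
  exact dExp_uncurry_cont a₀ b₀

lemma famD_mk (a : A) (b : B) (t : unitInterval) (h : tau (jq (a,b,t) : Join A B) ≠ 0) :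
    famD a₀ b₀ ⟨jq (a,b,t), h⟩ = (dExp a₀ b₀ a b t).toContinuousMap :=
  descend_mk _ _ _ ⟨(a,b,t), h⟩

lemma famC_zero (x : Join A B) (h : tau x ≠ 1) : famC a₀ b₀ ⟨x, h⟩ 0 = x := by
  obtain ⟨⟨a,b,t⟩, rfl⟩ := Quot.exists_rep x
  rw [famC_mk]
  exact (cExp a₀ b₀ a b t).source

lemma famC_one (x : Join A B) (h : tau x ≠ 1) :
    famC a₀ b₀ ⟨x, h⟩ 1 = jq (a₀,b₀,0) := by
  obtain ⟨⟨a,b,t⟩, rfl⟩ := Quot.exists_rep x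
  rw [famC_mk]
  exact (cExp a₀ b₀ a b t).target

lemma famD_zero (x : Join A B) (h : tau x ≠ 0) : famD a₀ b₀ ⟨x, h⟩ 0 = x := by
  obtain ⟨⟨a,b,t⟩, rfl⟩ := Quot.exists_rep x
  rw [famD_mk]
  exact (dExp a₀ b₀ a b t).source

lemma famD_one (x : Join A B) (h : tau x ≠ 0) :
    famD a₀ b₀ ⟨x, h⟩ 1 = jq (a₀,b₀,0) := by
  obtain ⟨⟨a,b,t⟩, rfl⟩ := Quot.exists_rep x
  rw [famD_mk]
  exact (dExp a₀ b₀ a b t).target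

/-- canonical path on `{τ ≠ 1}` to the base point. -/
noncomputable def cAt (x : Join A B) (h : tau x ≠ 1) : Path x (jq (a₀,b₀,0) : Join A B) :=
  ⟨famC a₀ b₀ ⟨x, h⟩, famC_zero a₀ b₀ x h, famC_one a₀ b₀ x h⟩

/-- canonical path on `{τ ≠ 0}` to the base point. -/
noncomputable def dAt (x : Join A B) (h : tau x ≠ 0) : Path x (jq (a₀,b₀,0) : Join A B) :=
  ⟨famD a₀ b₀ ⟨x, h⟩, famD_zero a₀ b₀ x h, famD_one a₀ b₀ x h⟩

lemma cAt_jq (a : A) (b : B) (t : unitInterval) (h : tau (jq (a,b,t) : Join A B) ≠ 1) :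
    cAt a₀ b₀ (jq (a,b,t)) h = cExp a₀ b₀ a b t := by
  apply Path.ext
  show ⇑(famC a₀ b₀ ⟨jq (a,b,t), h⟩) = _
  rw [famC_mk]
  rfl

lemma dAt_jq (a : A) (b : B) (t : unitInterval) (h : tau (jq (a,b,t) : Join A B) ≠ 0) :
    dAt a₀ b₀ (jq (a,b,t)) h = dExp a₀ b₀ a b t := by
  apply Path.ext
  show ⇑(famD a₀ b₀ ⟨jq (a,b,t), h⟩) = _
  rw [famD_mk]
  rfl

end Families

section PieceSquares

open CategoryTheory

variable {A B : Type} [TopologicalSpace A] [TopologicalSpace B]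
variable (a₀ : A) (b₀ : B)

@[simp] lemma eh_self {X : Type} [TopologicalSpace X] {x : X} (h : x = x) :
    eh h = 𝟙 (FundamentalGroupoid.mk x) := rfl

lemma cSquare {z w : Join A B} (δ : Path z w) (h : ∀ u, tau (δ u) ≠ 1)
    (hz : tau z ≠ 1) (hw : tau w ≠ 1) :
    hcl δ ≫ hcl (cAt a₀ b₀ w hw) = hcl (cAt a₀ b₀ z hz) := by
  have hGc : Continuous fun us : unitInterval × unitInterval =>
      famC a₀ b₀ ⟨δ us.1, h us.1⟩ us.2 := by
    have h1 : Continuous fun us : unitInterval × unitInterval =>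
        ((famC a₀ b₀ ⟨δ us.1, h us.1⟩ : C(unitInterval, Join A B)), us.2) :=
      ((famC_cont a₀ b₀).comp
        ((δ.continuous.comp continuous_fst).subtype_mk _)).prodMk continuous_snd
    exact ContinuousEval.continuous_eval.comp h1
  set G : C(unitInterval × unitInterval, Join A B) :=
    ⟨fun us => famC a₀ b₀ ⟨δ us.1, h us.1⟩ us.2, hGc⟩ with hG
  have hsq := square G
  -- identify the bottom edge with δ
  have hB : hcl δ = eh (δ.source.symm.trans (famC_zero a₀ b₀ (δ 0) (h 0)).symm)
      ≫ hcl (sqPathB.map G.continuous)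
      ≫ eh ((famC_zero a₀ b₀ (δ 1) (h 1)).trans δ.target) := by
    refine hcl_eq δ (sqPathB.map G.continuous) _ _ (fun u => ?_)
    exact (famC_zero a₀ b₀ (δ u) (h u)).symm
  -- identify the right edge with `cAt w`
  have hsub1 : (⟨δ 1, h 1⟩ : {x : Join A B // tau x ≠ 1}) = ⟨w, hw⟩ := Subtype.ext δ.target
  have hR : hcl (cAt a₀ b₀ w hw) = eh ((famC_zero a₀ b₀ (δ 1) (h 1)).trans δ.target).symm
      ≫ hcl (sqPathR.map G.continuous)
      ≫ eh (show famC a₀ b₀ ⟨δ 1, h 1⟩ 1 = jq (a₀, b₀, 0) from famC_one a₀ b₀ (δ 1) (h 1)) := by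
    refine hcl_eq _ _ _ _ (fun u => ?_)
    show famC a₀ b₀ ⟨w, hw⟩ u = famC a₀ b₀ ⟨δ 1, h 1⟩ u
    rw [hsub1]
  -- identify the left edge with `cAt z`
  have hsub0 : (⟨δ 0, h 0⟩ : {x : Join A B // tau x ≠ 1}) = ⟨z, hz⟩ := Subtype.ext δ.source
  have hL : hcl (cAt a₀ b₀ z hz) = eh (δ.source.symm.trans
        (famC_zero a₀ b₀ (δ 0) (h 0)).symm)
      ≫ hcl (sqPathL.map G.continuous)
      ≫ eh (show famC a₀ b₀ ⟨δ 0, h 0⟩ 1 = jq (a₀, b₀, 0) from famC_one a₀ b₀ (δ 0) (h 0)) := by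
    refine hcl_eq _ _ _ _ (fun u => ?_)
    show famC a₀ b₀ ⟨z, hz⟩ u = famC a₀ b₀ ⟨δ 0, h 0⟩ u
    rw [hsub0]
  -- the top edge is constant
  have hT := hcl_const (sqPathT.map G.continuous)
    (fun u => (famC_one a₀ b₀ (δ u) (h u)).trans (famC_one a₀ b₀ (δ 0) (h 0)).symm)
  rw [hB, hR, hL]
  simp only [Category.assoc, eh_trans_assoc, eh_self, Category.id_comp]
  rw [reassoc_of% hsq, hT]
  simp only [Category.assoc, eh_trans, eh_trans_assoc, eh_self, Category.comp_id]

lemma dSquare {z w : Join A B} (δ : Path z w) (h : ∀ u, tau (δ u) ≠ 0)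
    (hz : tau z ≠ 0) (hw : tau w ≠ 0) :
    hcl δ ≫ hcl (dAt a₀ b₀ w hw) = hcl (dAt a₀ b₀ z hz) := by
  have hGc : Continuous fun us : unitInterval × unitInterval =>
      famD a₀ b₀ ⟨δ us.1, h us.1⟩ us.2 := by
    have h1 : Continuous fun us : unitInterval × unitInterval =>
        ((famD a₀ b₀ ⟨δ us.1, h us.1⟩ : C(unitInterval, Join A B)), us.2) :=
      ((famD_cont a₀ b₀).comp
        ((δ.continuous.comp continuous_fst).subtype_mk _)).prodMk continuous_snd
    exact ContinuousEval.continuous_eval.comp h1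
  set G : C(unitInterval × unitInterval, Join A B) :=
    ⟨fun us => famD a₀ b₀ ⟨δ us.1, h us.1⟩ us.2, hGc⟩ with hG
  have hsq := square G
  have hB : hcl δ = eh (δ.source.symm.trans (famD_zero a₀ b₀ (δ 0) (h 0)).symm)
      ≫ hcl (sqPathB.map G.continuous)
      ≫ eh ((famD_zero a₀ b₀ (δ 1) (h 1)).trans δ.target) := by
    refine hcl_eq δ (sqPathB.map G.continuous) _ _ (fun u => ?_)
    exact (famD_zero a₀ b₀ (δ u) (h u)).symm
  have hsub1 : (⟨δ 1, h 1⟩ : {x : Join A B // tau x ≠ 0}) = ⟨w, hw⟩ := Subtype.ext δ.target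
  have hR : hcl (dAt a₀ b₀ w hw) = eh ((famD_zero a₀ b₀ (δ 1) (h 1)).trans δ.target).symm
      ≫ hcl (sqPathR.map G.continuous)
      ≫ eh (show famD a₀ b₀ ⟨δ 1, h 1⟩ 1 = jq (a₀, b₀, 0) from famD_one a₀ b₀ (δ 1) (h 1)) := by
    refine hcl_eq _ _ _ _ (fun u => ?_)
    show famD a₀ b₀ ⟨w, hw⟩ u = famD a₀ b₀ ⟨δ 1, h 1⟩ u
    rw [hsub1]
  have hsub0 : (⟨δ 0, h 0⟩ : {x : Join A B // tau x ≠ 0}) = ⟨z, hz⟩ := Subtype.ext δ.source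
  have hL : hcl (dAt a₀ b₀ z hz) = eh (δ.source.symm.trans
        (famD_zero a₀ b₀ (δ 0) (h 0)).symm)
      ≫ hcl (sqPathL.map G.continuous)
      ≫ eh (show famD a₀ b₀ ⟨δ 0, h 0⟩ 1 = jq (a₀, b₀, 0) from famD_one a₀ b₀ (δ 0) (h 0)) := by
    refine hcl_eq _ _ _ _ (fun u => ?_)
    show famD a₀ b₀ ⟨z, hz⟩ u = famD a₀ b₀ ⟨δ 0, h 0⟩ u
    rw [hsub0]
  have hT := hcl_const (sqPathT.map G.continuous)
    (fun u => (famD_one a₀ b₀ (δ u) (h u)).trans (famD_one a₀ b₀ (δ 0) (h 0)).symm)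
  rw [hB, hR, hL]
  simp only [Category.assoc, eh_trans_assoc, eh_self, Category.id_comp]
  rw [reassoc_of% hsq, hT]
  simp only [Category.assoc, eh_trans, eh_trans_assoc, eh_self, Category.comp_id]

end PieceSquares

section ChartCompat

open CategoryTheory

variable {A B : Type} [TopologicalSpace A] [TopologicalSpace B]

@[simp] lemma eh_inv {X : Type} [TopologicalSpace X] {x y : X} (h : x = y) :
    inv (eh h) = eh h.symm := by subst h; simp

lemma hcl_cast {X : Type} [TopologicalSpace X] {x y x' y' : X} (p : Path x y)
    (hx : x' = x) (hy : y' = y) :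
    hcl (p.cast hx hy) = eh hx ≫ hcl p ≫ eh hy.symm :=
  hcl_eq _ _ hx hy.symm (fun _ => rfl)

/-- the sliding square: moving the `A`-coordinate along a path `α`. -/
lemma Wsq {a₀ a : A} (α : Path a₀ a) (b : B) :
    hcl (botPath (B := B) b α) ≫ hcl (piPath a b) = hcl (piPath a₀ b) ≫ eh (jq_one a₀ a b) := by
  have hGc : Continuous fun us : unitInterval × unitInterval =>
      (jq (α us.1, b, us.2) : Join A B) := by
    refine jq_cont.comp ?_
    fun_prop
  set G : C(unitInterval × unitInterval, Join A B) := ⟨_, hGc⟩ with hGdef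
  have hsq := square G
  have e1 : (jq (a₀, b, 0) : Join A B) = G (0,0) :=
    congrArg (fun x => (jq (x, b, (0:unitInterval)) : Join A B)) α.source.symm
  have e2 : G (1,0) = (jq (a, b, 0) : Join A B) :=
    congrArg (fun x => (jq (x, b, (0:unitInterval)) : Join A B)) α.target
  have hB : hcl (botPath (B := B) b α) = eh e1 ≫ hcl (sqPathB.map G.continuous) ≫ eh e2 :=
    hcl_eq _ _ e1 e2 (fun u => rfl)
  have e3 : G (1,1) = (jq (a, b, 1) : Join A B) :=
    congrArg (fun x => (jq (x, b, (1:unitInterval)) : Join A B)) α.target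
  have hR : hcl (piPath a b) = eh e2.symm ≫ hcl (sqPathR.map G.continuous) ≫ eh e3 :=
    hcl_eq _ _ e2.symm e3 (fun u =>
      congrArg (fun x => (jq (x, b, u) : Join A B)) α.target.symm)
  have e4 : G (0,1) = (jq (a₀, b, 1) : Join A B) :=
    congrArg (fun x => (jq (x, b, (1:unitInterval)) : Join A B)) α.source
  have hL : hcl (piPath a₀ b) = eh e1 ≫ hcl (sqPathL.map G.continuous) ≫ eh e4 :=
    hcl_eq _ _ e1 e4 (fun u =>
      congrArg (fun x => (jq (x, b, u) : Join A B)) α.source.symm)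
  have hT := hcl_const (sqPathT.map G.continuous) (fun u => jq_one (α u) (α 0) b)
  rw [hB, hR, hL]
  simp only [Category.assoc, eh_trans_assoc, eh_trans, eh_self, Category.id_comp]
  rw [reassoc_of% hsq, hT]
  simp only [Category.assoc, eh_trans_assoc, eh_trans, eh_self, Category.comp_id]

variable (a₀ : A) (b₀ : B)

lemma chart_compat [PathConnectedSpace A] (a : A) (b : B) (t : unitInterval) :
    hcl (cExp a₀ b₀ a b t) = hcl (dExp a₀ b₀ a b t) := by
  obtain ⟨α⟩ : Joined a₀ a := PathConnectedSpace.joined a₀ a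
  have S1 : hcl (downPath a b t) ≫ hcl (piPath a b) = hcl (upPath a b t) := by
    rw [← hcl_trans]; exact down_trans_pi a b t
  have hPb : hcl (piPath a b)
      = inv (hcl (botPath (B := B) b α)) ≫ hcl (piPath a₀ b) ≫ eh (jq_one a₀ a b) := by
    rw [← Wsq α b, IsIso.inv_hom_id_assoc]
  have hPb0 : hcl (piPath a b₀)
      = inv (hcl (botPath (B := B) b₀ α)) ≫ hcl (piPath a₀ b₀) ≫ eh (jq_one a₀ a b₀) := by
    rw [← Wsq α b₀, IsIso.inv_hom_id_assoc]
  have hBb : hcl (botPath (B := B) b α)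
      = eh (jq_zero a₀ b b₀) ≫ hcl (botPath (B := B) b₀ α) ≫ eh (jq_zero a b₀ b) :=
    hcl_eq _ _ (jq_zero a₀ b b₀) (jq_zero a b₀ b) (fun u => jq_zero (α u) b b₀)
  unfold cExp dExp
  rw [hcl_trans, hcl_trans, hcl_trans, hcl_cast, hcl_cast, hcl_cast, hcl_symm, hcl_symm]
  rw [← S1]
  simp only [Category.assoc]
  rw [cancel_epi (hcl (downPath a b t))]
  rw [hPb, hPb0, hBb]
  simp only [Category.assoc, eh_trans_assoc, eh_trans, eh_self, Category.id_comp,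
    Category.comp_id, IsIso.inv_comp, eh_inv, IsIso.hom_inv_id_assoc, IsIso.inv_hom_id_assoc,
    IsIso.hom_inv_id, IsIso.inv_hom_id]

end ChartCompat

section Main

open CategoryTheory

variable {A B : Type} [TopologicalSpace A] [TopologicalSpace B]

lemma unit_one_ne_zero : (1 : unitInterval) ≠ 0 :=
  fun h => one_ne_zero (congrArg Subtype.val h)

variable (a₀ : A) (b₀ : B)

/-- The canonical homotopy class of paths to the base point. -/
noncomputable def can (x : Join A B) :
    FundamentalGroupoid.mk x ⟶ FundamentalGroupoid.mk (jq (a₀,b₀,0) : Join A B) :=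
  if h : tau x = 1 then hcl (dAt a₀ b₀ x (by rw [h]; exact unit_one_ne_zero))
  else hcl (cAt a₀ b₀ x h)

lemma can_eh {x y : Join A B} (h : x = y) : eh h ≫ can a₀ b₀ y = can a₀ b₀ x := by
  subst h; simp

lemma can_eq_c (x : Join A B) (h : tau x ≠ 1) : can a₀ b₀ x = hcl (cAt a₀ b₀ x h) :=
  dif_neg h

lemma can_eq_d [PathConnectedSpace A] (x : Join A B) (h : tau x ≠ 0) :
    can a₀ b₀ x = hcl (dAt a₀ b₀ x h) := by
  by_cases h1 : tau x = 1
  · exact dif_pos h1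
  · rw [can_eq_c a₀ b₀ x h1]
    obtain ⟨⟨a,b,t⟩, rfl⟩ := Quot.exists_rep x
    rw [cAt_jq, dAt_jq]
    exact chart_compat a₀ b₀ a b t

lemma piece [PathConnectedSpace A] {z w : Join A B} (δ : Path z w)
    (hδ : (∀ u, tau (δ u) ≠ 1) ∨ (∀ u, tau (δ u) ≠ 0)) :
    hcl δ ≫ can a₀ b₀ w = can a₀ b₀ z := by
  cases hδ with
  | inl h =>
      have hz : tau z ≠ 1 := δ.source ▸ h 0
      have hw : tau w ≠ 1 := δ.target ▸ h 1
      rw [can_eq_c a₀ b₀ z hz, can_eq_c a₀ b₀ w hw]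
      exact cSquare a₀ b₀ δ h hz hw
  | inr h =>
      have hz : tau z ≠ 0 := δ.source ▸ h 0
      have hw : tau w ≠ 0 := δ.target ▸ h 1
      rw [can_eq_d a₀ b₀ z hz, can_eq_d a₀ b₀ w hw]
      exact dSquare a₀ b₀ δ h hz hw

/-- affine path in `I`. -/
def iComb (c d : unitInterval) : Path c d := by
  refine ⟨⟨fun s => comb s c d, ?_⟩, comb_zero c d, comb_one c d⟩
  have h1 : Continuous fun s : unitInterval => ((s, c), d) := by fun_prop
  exact continuous_comb.comp h1

/-- affine subpath of a path. -/
def subPath {X : Type} [TopologicalSpace X] {x y : X} (p : Path x y) (c d : unitInterval) :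
    Path (p c) (p d) :=
  (iComb c d).map p.continuous

lemma subPath_split {X : Type} [TopologicalSpace X] {x y : X} (p : Path x y)
    (c d e : unitInterval) :
    hcl (subPath p c e) = hcl (subPath p c d) ≫ hcl (subPath p d e) := by
  rw [← hcl_trans]
  unfold subPath
  rw [← Path.map_trans]
  exact (Quotient.sound (Path.Homotopic.map (homotopic_I _ _) p.toContinuousMap)).symm

lemma hcl_subPath_self {X : Type} [TopologicalSpace X] {x y : X} (p : Path x y)
    (c : unitInterval) :
    hcl (subPath p c c) = eh (rfl : p c = p c) :=
  hcl_const (subPath p c c) (fun u => congrArg p (comb_self u c))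

lemma hcl_eq_subPath {X : Type} [TopologicalSpace X] {x y : X} (p : Path x y) :
    hcl p = eh p.source.symm ≫ hcl (subPath p 0 1) ≫ eh p.target := by
  refine hcl_eq _ _ p.source.symm p.target (fun u => ?_)
  show p u = p (comb u 0 1)
  refine congrArg p (Subtype.ext ?_)
  show (u : ℝ) = (1 - u) * ((0 : unitInterval) : ℝ) + u * ((1 : unitInterval) : ℝ)
  simp

lemma main_lemma [PathConnectedSpace A] {x y : Join A B} (p : Path x y) :
    hcl p ≫ can a₀ b₀ y = can a₀ b₀ x := by
  -- Lebesgue number for the two-set cover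
  set c : Bool → Set unitInterval := fun i =>
    if i then ⇑p ⁻¹' (tau ⁻¹' {s : unitInterval | s ≠ 1})
    else ⇑p ⁻¹' (tau ⁻¹' {s : unitInterval | s ≠ 0}) with hc
  have hcopen : ∀ i, IsOpen (c i) := by
    intro i
    cases i <;>
      simp only [hc, if_true, if_false] <;>
      exact (IsOpen.preimage tau_cont isOpen_ne).preimage p.continuous
  have hccover : (Set.univ : Set unitInterval) ⊆ ⋃ i, c i := by
    intro u _
    by_cases h1 : tau (p u) = 1
    · refine Set.mem_iUnion.mpr ⟨false, ?_⟩
      simp only [hc, if_false, Set.mem_preimage, Set.mem_setOf_eq, Bool.false_eq_true, ite_false]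
      rw [h1]; exact unit_one_ne_zero
    · refine Set.mem_iUnion.mpr ⟨true, ?_⟩
      simp only [hc, Set.mem_preimage, Set.mem_setOf_eq, ite_true]
      exact h1
  obtain ⟨δ, hδpos, hδ⟩ := lebesgue_number_lemma_of_metric isCompact_univ hcopen hccover
  obtain ⟨n, hn⟩ := exists_nat_one_div_lt hδpos
  set N : ℕ := n + 1 with hN
  have hn' : 1 / (N:ℝ) < δ := by rw [hN]; push_cast; exact hn
  have hNpos : (0:ℝ) < N := by positivity
  -- subdivision points
  set v : ℕ → unitInterval := fun k => ⟨min ((k : ℝ) / N) 1,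
    le_min (by positivity) zero_le_one, min_le_right _ _⟩ with hv
  have hv0 : v 0 = 0 := Subtype.ext (by simp [hv])
  have hvN : v N = 1 := Subtype.ext (by
    simp only [hv]
    rw [div_self (ne_of_gt hNpos)]
    simp)
  -- each short subpath lies in one of the two sets
  have hpiece : ∀ k : ℕ, hcl (subPath p (v k) (v (k+1))) ≫ can a₀ b₀ (p (v (k+1)))
      = can a₀ b₀ (p (v k)) := by
    intro k
    obtain ⟨i, hi⟩ := hδ (v k) trivial
    have hsub : ∀ u : unitInterval, comb u (v k) (v (k+1)) ∈ Metric.ball (v k) δ := by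
      intro u
      rw [Metric.mem_ball, Subtype.dist_eq, Real.dist_eq]
      show |((1 - u.1) * (v k).1 + u.1 * (v (k+1)).1) - (v k).1| < δ
      have h1 : (1 - u.1) * (v k).1 + u.1 * (v (k+1)).1 - (v k).1
          = u.1 * ((v (k+1)).1 - (v k).1) := by ring
      rw [h1, abs_mul]
      have h2 : (v (k+1)).1 - (v k).1 ≤ 1 / N := by
        show min (((k+1:ℕ):ℝ) / N) 1 - min (((k:ℕ):ℝ) / N) 1 ≤ 1 / N
        rcases le_or_gt (((k:ℕ):ℝ) / N) 1 with h | h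
        · rw [min_eq_left h]
          have h4 : min (((k+1:ℕ):ℝ)/N) 1 ≤ (((k:ℕ):ℝ)+1)/N := by
            push_cast
            exact min_le_left _ _
          have h5 : (((k:ℕ):ℝ)+1)/N = ((k:ℕ):ℝ)/N + 1/N := by ring
          linarith
        · have hk2 : (1:ℝ) ≤ ((k+1:ℕ):ℝ)/N := by
            refine le_trans (le_of_lt h) ?_
            push_cast
            gcongr
            · linarith
          rw [min_eq_right (le_of_lt h), min_eq_right hk2]
          simp only [sub_self]
          positivity
      have h3 : (0:ℝ) ≤ (v (k+1)).1 - (v k).1 := by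
        apply sub_nonneg.mpr
        show min (((k:ℕ):ℝ) / N) 1 ≤ min (((k+1:ℕ):ℝ) / N) 1
        refine min_le_min ?_ (le_refl _)
        push_cast
        gcongr
        linarith
      calc |u.1| * |(v (k+1)).1 - (v k).1| ≤ 1 * (1/N) := by
            apply mul_le_mul (abs_le.mpr ⟨by linarith [u.2.1], u.2.2⟩)
              (by rw [abs_of_nonneg h3]; exact h2) (abs_nonneg _) zero_le_one
        _ = 1/N := one_mul _
        _ < δ := hn'
    refine piece a₀ b₀ (subPath p (v k) (v (k+1))) ?_
    cases i
    · right
      intro u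
      have := hi (hsub u)
      simp only [hc, Bool.false_eq_true, ite_false, Set.mem_preimage, Set.mem_setOf_eq] at this
      exact this
    · left
      intro u
      have := hi (hsub u)
      simp only [hc, ite_true, Set.mem_preimage, Set.mem_setOf_eq] at this
      exact this
  -- downward induction
  have hmain : ∀ m, m ≤ N → hcl (subPath p (v (N - m)) (v N)) ≫ can a₀ b₀ (p (v N))
      = can a₀ b₀ (p (v (N - m))) := by
    intro m
    induction m with
    | zero =>
        intro _
        rw [Nat.sub_zero, hcl_subPath_self]
        exact can_eh a₀ b₀ rfl
    | succ m ih =>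
        intro hm
        have hk : N - (m+1) + 1 = N - m := by omega
        rw [subPath_split p (v (N - (m+1))) (v (N - (m+1) + 1)) (v N), Category.assoc, hk,
          ih (by omega), ← hk]
        exact hpiece (N - (m+1))
  have hfin := hmain N (le_refl N)
  rw [Nat.sub_self, hv0, hvN] at hfin
  rw [hcl_eq_subPath p]
  simp only [Category.assoc]
  rw [can_eh a₀ b₀ p.target, hfin]
  exact can_eh a₀ b₀ p.source.symm

end Main


end JoinSC

/-- If `A` is path-connected and `B` is nonempty, the join `A ∗ B` is simply
connected. -/
theorem join_simply_connected (A B : Type) [TopologicalSpace A]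
    [TopologicalSpace B] [PathConnectedSpace A] [Nonempty B] :
    SimplyConnectedSpace (Join A B) := by
  rw [simply_connected_iff_paths_homotopic]
  obtain ⟨a₀⟩ : Nonempty A := PathConnectedSpace.nonempty
  obtain ⟨b₀⟩ := ‹Nonempty B›
  constructor
  · exact ⟨⟨JoinSC.jq (a₀,b₀,0)⟩,
      fun x y => (JoinSC.joined_base a₀ b₀ x).trans (JoinSC.joined_base a₀ b₀ y).symm⟩
  · intro x y
    constructor
    intro P Q
    refine Quotient.inductionOn₂ P Q fun p p' => ?_
    have h1 := JoinSC.main_lemma a₀ b₀ p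
    have h2 := JoinSC.main_lemma a₀ b₀ p'
    have h3 : JoinSC.hcl p = JoinSC.hcl p' := by
      rw [← CategoryTheory.cancel_mono (JoinSC.can a₀ b₀ y), h1, h2]
    exact h3
end
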